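/- The minimal size of a blocking set in dimension 3 is h(3) = 4. -/
import Mathlib


/-- Two cube centers in `{0,1,2,3}^d` (modeled as `(ZMod 4)^d`) overlap iff
no coordinate differs by exactly 2 modulo 4. -/
def Overlap {d : ℕ} (x y : Fin d → ZMod 4) : Prop := ∀ i, x i - y i ≠ 2

/-- A cube packing: pairwise non-overlapping centers. -/
def IsPacking {d : ℕ} (P : Finset (Fin d → ZMod 4)) : Prop :=
  ∀ x ∈ P, ∀ y ∈ P, x ≠ y → ¬ Overlap x y

/-- Non-extendible cube packing: no vector outside can be added. -/
def IsNonExtendible {d : ℕ} (P : Finset (Fin d → ZMod 4)) : Prop :=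
  IsPacking P ∧ ∀ v : Fin d → ZMod 4, v ∉ P → ∃ x ∈ P, Overlap v x

/-- Blocking set: every vector overlaps some element of `S`. -/
def IsBlocking {d : ℕ} (S : Finset (Fin d → ZMod 4)) : Prop :=
  ∀ v : Fin d → ZMod 4, ∃ s ∈ S, Overlap v s

/-- `f d`: minimal number of cubes in a non-extendible cube packing. -/
noncomputable def f (d : ℕ) : ℕ :=
  sInf {n | ∃ P : Finset (Fin d → ZMod 4), IsNonExtendible P ∧ P.card = n}

/-- `h d`: minimal size of a blocking set. -/
noncomputable def hBlock (d : ℕ) : ℕ :=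
  sInf {n | ∃ S : Finset (Fin d → ZMod 4), IsBlocking S ∧ S.card = n}


instance {d : ℕ} (x y : Fin d → ZMod 4) : Decidable (Overlap x y) := by
  unfold Overlap; infer_instance

set_option maxHeartbeats 4000000 in
set_option maxRecDepth 100000 in
private lemma key3 : ∀ b c : Fin 3 → ZMod 4, ∃ v : Fin 3 → ZMod 4,
    ¬ Overlap v 0 ∧ ¬ Overlap v b ∧ ¬ Overlap v c := by decide

/-- The diagonal blocking set of size 4. -/
private def S4 : Finset (Fin 3 → ZMod 4) :=
  {(fun _ => 0), (fun _ => 1), (fun _ => 2), (fun _ => 3)}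

instance {d : ℕ} (S : Finset (Fin d → ZMod 4)) : Decidable (IsBlocking S) := by
  unfold IsBlocking; infer_instance

private lemma S4_blocking : IsBlocking S4 := by decide

private lemma S4_card : S4.card = 4 := by decide

private lemma blocking_mono {d : ℕ} {S T : Finset (Fin d → ZMod 4)}
    (hST : S ⊆ T) (hS : IsBlocking S) : IsBlocking T := by
  intro v
  obtain ⟨s, hs, ho⟩ := hS v
  exact ⟨s, hST hs, ho⟩

private lemma lower (S : Finset (Fin 3 → ZMod 4)) (hS : IsBlocking S) : 4 ≤ S.card := by
  by_contra h
  push_neg at h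
  have hle : S.card ≤ 3 := by omega
  obtain ⟨T, hST, hTcard⟩ := Finset.exists_superset_card_eq hle
    (by simp [Fintype.card_fun])
  have hT : IsBlocking T := blocking_mono hST hS
  obtain ⟨a, b, c, _, _, _, rfl⟩ := Finset.card_eq_three.mp hTcard
  obtain ⟨v, h0, hb, hc⟩ := key3 (b - a) (c - a)
  obtain ⟨s, hs, ho⟩ := hT (v + a)
  simp only [Finset.mem_insert, Finset.mem_singleton] at hs
  rcases hs with rfl | rfl | rfl
  · exact h0 (fun i => by simpa [sub_eq_add_neg, add_assoc] using ho i)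
  · exact hb (fun i => by
      have := ho i
      simp only [Pi.add_apply, Pi.sub_apply] at this ⊢
      have e : v i - (s i - a i) = v i + a i - s i := by ring
      rw [e]; exact this)
  · exact hc (fun i => by
      have := ho i
      simp only [Pi.add_apply, Pi.sub_apply] at this ⊢
      have e : v i - (s i - a i) = v i + a i - s i := by ring
      rw [e]; exact this)

theorem hBlock_three : hBlock 3 = 4 := by
  have hmem : 4 ∈ {n | ∃ S : Finset (Fin 3 → ZMod 4), IsBlocking S ∧ S.card = n} :=
    ⟨S4, S4_blocking, S4_card⟩
  refine le_antisymm (Nat.sInf_le hmem) (le_csInf ⟨4, hmem⟩ ?_)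
  rintro n ⟨S, hS, rfl⟩
  exact lower S hS
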